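/- For every positive integer $d$, $d \sum_{\lambda \vdash d} \frac{(-1)^{\ell(\lambda)-1}(\ell(\lambda)-1)! \prod_{i \ge 1} F_{i+1}^{m_i(\lambda)}}{\prod_{i\ge 1} m_i(\lambda)!} = L_d$, where $F_n$ are the Fibonacci numbers and $L_d$ the Lucas numbers. -/

import Mathlib

open Finset

noncomputable def Wgt (a : ℕ → ℝ) (s : Multiset ℕ) : ℝ :=
  (-1 : ℝ) ^ (Multiset.card s - 1) * (Nat.factorial (Multiset.card s - 1)) *
    (s.map a).prod / ∏ i ∈ s.toFinset, (Nat.factorial (s.count i) : ℝ)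

lemma Dfac_pos (s : Multiset ℕ) : (0:ℝ) < ∏ i ∈ s.toFinset, (Nat.factorial (s.count i) : ℝ) := by
  apply Finset.prod_pos
  intro i _
  exact_mod_cast Nat.factorial_pos _

lemma Dfac_cons (k : ℕ) (s : Multiset ℕ) :
    ∏ i ∈ (k ::ₘ s).toFinset, (Nat.factorial ((k ::ₘ s).count i) : ℝ)
      = (s.count k + 1) * ∏ i ∈ s.toFinset, (Nat.factorial (s.count i) : ℝ) := by
  rw [Multiset.toFinset_cons]
  by_cases hk : k ∈ s.toFinset
  · rw [Finset.insert_eq_self.2 hk]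
    rw [← Finset.mul_prod_erase _ _ hk, ← Finset.mul_prod_erase _ (fun i => (Nat.factorial (s.count i) : ℝ)) hk]
    have he : ∏ x ∈ s.toFinset.erase k, (Nat.factorial ((k ::ₘ s).count x) : ℝ)
        = ∏ x ∈ s.toFinset.erase k, (Nat.factorial (s.count x) : ℝ) := by
      apply Finset.prod_congr rfl
      intro i hi
      rw [Multiset.count_cons_of_ne (Finset.ne_of_mem_erase hi)]
    rw [he, Multiset.count_cons_self]
    push_cast [Nat.factorial_succ]
    ring
  · rw [Finset.prod_insert hk, Multiset.count_cons_self,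
      Multiset.count_eq_zero_of_notMem (by simpa using hk)]
    have he : ∏ x ∈ s.toFinset, (Nat.factorial ((k ::ₘ s).count x) : ℝ)
        = ∏ x ∈ s.toFinset, (Nat.factorial (s.count x) : ℝ) := by
      apply Finset.prod_congr rfl
      intro i hi
      rw [Multiset.count_cons_of_ne (by rintro rfl; exact hk hi)]
    rw [he]
    norm_num

lemma Wgt_cons (a : ℕ → ℝ) (k : ℕ) (s : Multiset ℕ) (hs : s ≠ 0) :
    (((k ::ₘ s).count k : ℝ)) * Wgt a (k ::ₘ s)
      = - (Multiset.card s : ℝ) * (a k * Wgt a s) := by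
  have hc : 1 ≤ Multiset.card s := Multiset.card_pos.2 hs
  unfold Wgt
  rw [Multiset.card_cons, Multiset.map_cons, Multiset.prod_cons, Dfac_cons,
    Multiset.count_cons_self]
  have h1 : Multiset.card s + 1 - 1 = Multiset.card s := by omega
  rw [h1]
  obtain ⟨c, hc'⟩ : ∃ c, Multiset.card s = c + 1 := ⟨Multiset.card s - 1, by omega⟩
  rw [hc']
  have h2 : c + 1 - 1 = c := by omega
  rw [h2, pow_succ, Nat.factorial_succ]
  have hD := (Dfac_pos s).ne'
  have hcnt : ((s.count k : ℝ) + 1) ≠ 0 := by positivity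
  field_simp
  push_cast
  ring

lemma Wgt_single (a : ℕ → ℝ) (d : ℕ) : Wgt a {d} = a d := by
  unfold Wgt
  simp

-- partitions with fewer than 2 parts, d ≥ 1
lemma card_filter_small (d : ℕ) (hd : 1 ≤ d) :
    (univ : Finset (Nat.Partition d)).filter (fun p => ¬ 2 ≤ Multiset.card p.parts)
      = {Nat.Partition.indiscrete d} := by
  apply Finset.eq_singleton_iff_unique_mem.2
  constructor
  · simp only [Finset.mem_filter, Finset.mem_univ, true_and]
    rw [Nat.Partition.indiscrete_parts (by omega)]
    simp
  · rintro p hp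
    simp only [Finset.mem_filter, Finset.mem_univ, true_and] at hp
    have h0 : p.parts ≠ 0 := by
      intro h
      have := p.parts_sum
      rw [h] at this
      simp at this
      omega
    have hc : Multiset.card p.parts = 1 := by
      have := Multiset.card_pos.2 h0
      omega
    obtain ⟨m, hm⟩ := Multiset.card_eq_one.1 hc
    ext1
    rw [hm, Nat.Partition.indiscrete_parts (by omega)]
    have := p.parts_sum
    rw [hm] at this
    simp at this
    rw [this]

def consPart {d k : ℕ} (hk1 : 1 ≤ k) (hk2 : k ≤ d) (q : Nat.Partition (d - k)) :
    Nat.Partition d where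
  parts := k ::ₘ q.parts
  parts_pos := by
    intro i hi
    rcases Multiset.mem_cons.1 hi with rfl | h
    · omega
    · exact q.parts_pos h
  parts_sum := by
    rw [Multiset.sum_cons, q.parts_sum]
    omega

def erasePart {d : ℕ} (p : Nat.Partition d) (k : ℕ) (hk : k ∈ p.parts) :
    Nat.Partition (d - k) where
  parts := p.parts.erase k
  parts_pos := fun h => p.parts_pos (Multiset.mem_of_mem_erase h)
  parts_sum := by
    have h2 : k + (p.parts.erase k).sum = d := by
      rw [← Multiset.sum_cons, Multiset.cons_erase hk, p.parts_sum]
    omega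

lemma erase_sum_pos {d : ℕ} (p : Nat.Partition d) (k : ℕ) (hk : k ∈ p.parts)
    (hp : 2 ≤ Multiset.card p.parts) : 1 ≤ (p.parts.erase k).sum := by
  have hc : 0 < Multiset.card (p.parts.erase k) := by
    have := Multiset.card_erase_of_mem hk
    rw [this, Nat.pred_eq_sub_one]
    omega
  obtain ⟨m, hm⟩ := Multiset.exists_mem_of_ne_zero (Multiset.card_pos.1 hc)
  have hmpos : 1 ≤ m := p.parts_pos (Multiset.mem_of_mem_erase hm)
  obtain ⟨t, ht⟩ := Multiset.exists_cons_of_mem hm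
  rw [ht, Multiset.sum_cons]
  omega



lemma innerSumW (a : ℕ → ℝ) (d : ℕ) (p : Nat.Partition d)
    (hp : 2 ≤ Multiset.card p.parts) :
    ∑ k ∈ p.parts.toFinset, a k * ((d - k : ℕ) : ℝ) * Wgt a (p.parts.erase k)
      = - (d : ℝ) * Wgt a p.parts := by
  classical
  set ℓ := Multiset.card p.parts with hℓ
  have hcard_erase : ∀ k ∈ p.parts, Multiset.card (p.parts.erase k) = ℓ - 1 := by
    intro k hk
    rw [Multiset.card_erase_of_mem hk, Nat.pred_eq_sub_one]
  have hterm : ∀ k ∈ p.parts.toFinset,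
      a k * ((d - k : ℕ) : ℝ) * Wgt a (p.parts.erase k)
        = (((d - k) * p.parts.count k : ℕ) : ℝ) * (- Wgt a p.parts / ((ℓ:ℝ) - 1)) := by
    intro k hk'
    have hk : k ∈ p.parts := Multiset.mem_toFinset.1 hk'
    have hne : p.parts.erase k ≠ 0 := by
      intro h
      have := hcard_erase k hk
      rw [h] at this
      simp at this
      omega
    have hWc := Wgt_cons a k (p.parts.erase k) hne
    rw [Multiset.cons_erase hk] at hWc
    have hcast : ((Multiset.card (p.parts.erase k) : ℕ) : ℝ) = (ℓ:ℝ) - 1 := by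
      rw [hcard_erase k hk]
      have h1 : (1:ℕ) ≤ ℓ := by omega
      push_cast [Nat.cast_sub h1]
      ring
    rw [hcast] at hWc
    have hℓne : ((ℓ:ℝ) - 1) ≠ 0 := by
      have : (2:ℝ) ≤ (ℓ:ℝ) := by exact_mod_cast hp
      linarith
    have hkey : a k * Wgt a (p.parts.erase k)
        = (p.parts.count k : ℝ) * (- Wgt a p.parts / ((ℓ:ℝ) - 1)) := by
      field_simp
      linarith [hWc]
    rw [mul_comm (a k) (((d - k : ℕ) : ℝ)), mul_assoc, hkey]
    push_cast
    ring
  rw [Finset.sum_congr rfl hterm, ← Finset.sum_mul]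
  -- the natural number identity
  have hnat : ∑ k ∈ p.parts.toFinset, (d - k) * p.parts.count k = d * (ℓ - 1) := by
    have h1 : ∑ k ∈ p.parts.toFinset, p.parts.count k = ℓ :=
      Multiset.toFinset_sum_count_eq p.parts
    have h2 : ∑ k ∈ p.parts.toFinset, k * p.parts.count k = d := by
      have hmc := Finset.sum_multiset_map_count p.parts (id : ℕ → ℕ)
      rw [Multiset.map_id] at hmc
      calc ∑ k ∈ p.parts.toFinset, k * p.parts.count k
          = ∑ k ∈ p.parts.toFinset, p.parts.count k • id k := by
            apply Finset.sum_congr rfl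
            intro i _
            simp [mul_comm]
        _ = p.parts.sum := hmc.symm
        _ = d := p.parts_sum
    have hkd : ∀ k ∈ p.parts.toFinset, k ≤ d := by
      intro k hk
      have hk2 : k ∈ p.parts := Multiset.mem_toFinset.1 hk
      obtain ⟨t, ht⟩ := Multiset.exists_cons_of_mem hk2
      have := p.parts_sum
      rw [ht, Multiset.sum_cons] at this
      omega
    have hsplit : ∀ k ∈ p.parts.toFinset,
        (d - k) * p.parts.count k + k * p.parts.count k = d * p.parts.count k := by
      intro k hk
      rw [← add_mul, Nat.sub_add_cancel (hkd k hk)]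
    have hsum : (∑ k ∈ p.parts.toFinset, (d - k) * p.parts.count k)
        + ∑ k ∈ p.parts.toFinset, k * p.parts.count k
        = d * ℓ := by
      rw [← Finset.sum_add_distrib, Finset.sum_congr rfl hsplit, ← Finset.mul_sum, h1]
    have hmul : d * (ℓ - 1) = d * ℓ - d := by
      rw [Nat.mul_sub, Nat.mul_one]
    omega
  rw [← Nat.cast_sum, hnat]
  have h1 : (1:ℕ) ≤ ℓ := by omega
  push_cast [Nat.cast_sub h1]
  have hℓne : ((ℓ:ℝ) - 1) ≠ 0 := by
    have : (2:ℝ) ≤ (ℓ:ℝ) := by exact_mod_cast hp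
    linarith
  field_simp

lemma newtonW (a : ℕ → ℝ) (d : ℕ) (hd : 1 ≤ d) :
    (d:ℝ) * ∑ p : Nat.Partition d, Wgt a p.parts
      + ∑ k ∈ Icc 1 (d-1), a k * ((d - k : ℕ) : ℝ) *
          ∑ q : Nat.Partition (d-k), Wgt a q.parts
    = (d:ℝ) * a d := by
  classical
  have hstep1 : ∑ k ∈ Icc 1 (d-1), a k * ((d - k : ℕ) : ℝ) *
          ∑ q : Nat.Partition (d-k), Wgt a q.parts
      = ∑ x ∈ (Icc 1 (d-1)).sigma (fun k => (univ : Finset (Nat.Partition (d-k)))),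
          a x.1 * ((d - x.1 : ℕ) : ℝ) * Wgt a x.2.parts := by
    rw [Finset.sum_sigma]
    exact Finset.sum_congr rfl fun k _ => Finset.mul_sum _ _ _
  have hstep2 : ∑ x ∈ (Icc 1 (d-1)).sigma (fun k => (univ : Finset (Nat.Partition (d-k)))),
          a x.1 * ((d - x.1 : ℕ) : ℝ) * Wgt a x.2.parts
      = ∑ y ∈ ((univ : Finset (Nat.Partition d)).filter
            (fun p => 2 ≤ Multiset.card p.parts)).sigma (fun p => p.parts.toFinset),
          a y.2 * ((d - y.2 : ℕ) : ℝ) * Wgt a (y.1.parts.erase y.2) := by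
    refine Finset.sum_bij'
      (fun (x : Σ k : ℕ, Nat.Partition (d - k))
           (hx : x ∈ (Icc 1 (d-1)).sigma fun k => univ) =>
        (⟨consPart (d := d)
            (by have := Finset.mem_Icc.1 (Finset.mem_sigma.1 hx).1; omega)
            (by have := Finset.mem_Icc.1 (Finset.mem_sigma.1 hx).1; omega) x.2, x.1⟩ :
          Σ p : Nat.Partition d, ℕ))
      (fun y hy =>
        ⟨y.2, erasePart y.1 y.2 (Multiset.mem_toFinset.1 (Finset.mem_sigma.1 hy).2)⟩)
      ?_ ?_ ?_ ?_ ?_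
    · rintro ⟨k, q⟩ hx
      simp only [Finset.mem_sigma, Finset.mem_Icc, Finset.mem_univ, and_true] at hx
      have hk := hx
      rw [Finset.mem_sigma]
      constructor
      · rw [Finset.mem_filter]
        refine ⟨Finset.mem_univ _, ?_⟩
        show 2 ≤ Multiset.card (k ::ₘ q.parts)
        rw [Multiset.card_cons]
        have hq : q.parts ≠ 0 := by
          intro h
          have := q.parts_sum
          rw [h] at this
          simp at this
          omega
        have := Multiset.card_pos.2 hq
        omega
      · show k ∈ (k ::ₘ q.parts).toFinset
        simp
    · rintro ⟨p, k⟩ hy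
      simp only [Finset.mem_sigma, Finset.mem_filter, Finset.mem_univ, true_and,
        Multiset.mem_toFinset] at hy
      obtain ⟨hp2, hk⟩ := hy
      rw [Finset.mem_sigma]
      refine ⟨?_, Finset.mem_univ _⟩
      rw [Finset.mem_Icc]
      show 1 ≤ k ∧ k ≤ d - 1
      have h1 : 1 ≤ k := p.parts_pos hk
      have h2 : k + (p.parts.erase k).sum = d := by
        rw [← Multiset.sum_cons, Multiset.cons_erase hk, p.parts_sum]
      have h3 := erase_sum_pos p k hk hp2
      omega
    · rintro ⟨k, q⟩ hx
      refine Sigma.ext rfl (heq_of_eq ?_)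
      ext1
      show (k ::ₘ q.parts).erase k = q.parts
      exact Multiset.erase_cons_head k q.parts
    · rintro ⟨p, k⟩ hy
      have hy' := Finset.mem_sigma.1 hy
      have hk : k ∈ p.parts := Multiset.mem_toFinset.1 hy'.2
      refine Sigma.ext ?_ (heq_of_eq rfl)
      ext1
      show k ::ₘ p.parts.erase k = p.parts
      exact Multiset.cons_erase hk
    · rintro ⟨k, q⟩ hx
      show a k * _ * Wgt a q.parts = a k * _ * Wgt a ((k ::ₘ q.parts).erase k)
      rw [Multiset.erase_cons_head]
  rw [hstep1, hstep2, Finset.sum_sigma]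
  have hstep3 : ∑ p ∈ (univ : Finset (Nat.Partition d)).filter
        (fun p => 2 ≤ Multiset.card p.parts),
      ∑ k ∈ p.parts.toFinset, a k * ((d - k : ℕ) : ℝ) * Wgt a (p.parts.erase k)
      = ∑ p ∈ (univ : Finset (Nat.Partition d)).filter
          (fun p => 2 ≤ Multiset.card p.parts), (- (d:ℝ) * Wgt a p.parts) := by
    apply Finset.sum_congr rfl
    intro p hp
    exact innerSumW a d p (Finset.mem_filter.1 hp).2
  rw [hstep3]
  have hsplit := Finset.sum_filter_add_sum_filter_not
    (univ : Finset (Nat.Partition d)) (fun p => 2 ≤ Multiset.card p.parts)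
    (fun p => Wgt a p.parts)
  have hsmall : (univ : Finset (Nat.Partition d)).filter
      (fun p => ¬ 2 ≤ Multiset.card p.parts) = {Nat.Partition.indiscrete d} :=
    card_filter_small d hd
  have h4 : ∑ p ∈ (univ : Finset (Nat.Partition d)).filter
      (fun p => 2 ≤ Multiset.card p.parts), (-(d:ℝ) * Wgt a p.parts)
      = -(d:ℝ) * ∑ p ∈ (univ : Finset (Nat.Partition d)).filter
        (fun p => 2 ≤ Multiset.card p.parts), Wgt a p.parts := by
    rw [Finset.mul_sum]
  rw [h4]
  have h5 : ∑ p ∈ (univ : Finset (Nat.Partition d)).filter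
      (fun p => ¬ 2 ≤ Multiset.card p.parts), Wgt a p.parts = a d := by
    rw [hsmall, Finset.sum_singleton]
    have hi : (Nat.Partition.indiscrete d).parts = {d} :=
      Nat.Partition.indiscrete_parts (by omega)
    rw [hi, Wgt_single]
  linear_combination (-(d:ℝ)) * hsplit + (d:ℝ) * h5



lemma lucas_conv (L : ℕ → ℝ) (hL1 : L 1 = 1) (hL2 : L 2 = 3)
    (hLrec : ∀ n : ℕ, 3 ≤ n → L n = L (n - 1) + L (n - 2)) :
    ∀ m : ℕ, ∑ j ∈ range m, (Nat.fib (j+2) : ℝ) * L (m - j)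
      = (m+1) * Nat.fib (m+2) - L (m+1) := by
  intro m
  induction m using Nat.twoStepInduction with
  | zero => simp [hL1]
  | one =>
    rw [Finset.sum_range_one]
    norm_num [hL1, hL2, Nat.fib_two, show Nat.fib 3 = 2 from rfl]
  | more n ih1 ih2 =>
    rw [Finset.sum_range_succ, Finset.sum_range_succ]
    have e1 : n + 2 - (n + 1) = 1 := by omega
    have e2 : n + 2 - n = 2 := by omega
    rw [e1, e2, hL1, hL2]
    have hsplit : ∀ j ∈ range n, (Nat.fib (j+2) : ℝ) * L (n + 2 - j)
        = (Nat.fib (j+2) : ℝ) * L (n + 1 - j) + (Nat.fib (j+2) : ℝ) * L (n - j) := by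
      intro j hj
      have hj' : j < n := Finset.mem_range.1 hj
      have h1 : n + 2 - j = (n - j) + 2 := by omega
      have h2 : (n - j) + 2 - 1 = (n + 1) - j := by omega
      have h3 : (n - j) + 2 - 2 = n - j := by omega
      rw [h1, hLrec ((n - j) + 2) (by omega), h2, h3, mul_add]
    rw [Finset.sum_congr rfl hsplit, Finset.sum_add_distrib]
    rw [Finset.sum_range_succ] at ih2
    have e3 : n + 1 - n = 1 := by omega
    rw [e3, hL1] at ih2
    have hrec3 : L (n + 3) = L (n + 2) + L (n + 1) := by
      have := hLrec (n + 3) (by omega)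
      have e4 : n + 3 - 1 = n + 2 := by omega
      have e5 : n + 3 - 2 = n + 1 := by omega
      rwa [e4, e5] at this
    have hfib4 : (Nat.fib (n + 4) : ℝ) = Nat.fib (n + 3) + Nat.fib (n + 2) := by
      rw [show n + 4 = (n + 2) + 2 from rfl, Nat.fib_add_two]
      push_cast
      ring
    simp only [show n+1+2 = n+3 from by omega, show n+2+2 = n+4 from by omega,
      show n+1+1 = n+2 from by omega, show n+2+1 = n+3 from by omega] at ih2 ⊢
    push_cast
    push_cast at ih1 ih2
    linear_combination ih1 + ih2 + hrec3 - ((n:ℝ)+3) * hfib4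

lemma mainS (L : ℕ → ℝ) (hL1 : L 1 = 1) (hL2 : L 2 = 3)
    (hLrec : ∀ n : ℕ, 3 ≤ n → L n = L (n - 1) + L (n - 2)) :
    ∀ d : ℕ, 1 ≤ d →
      (d:ℝ) * ∑ p : Nat.Partition d, Wgt (fun i => (Nat.fib (i+1) : ℝ)) p.parts = L d := by
  intro d
  induction d using Nat.strong_induction_on with
  | _ d ih =>
    intro hd
    set a : ℕ → ℝ := fun i => (Nat.fib (i+1) : ℝ) with ha
    have hN := newtonW a d hd
    have hterm : ∀ k ∈ Icc 1 (d-1),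
        a k * ((d - k : ℕ) : ℝ) * ∑ q : Nat.Partition (d-k), Wgt a q.parts
          = a k * L (d - k) := by
      intro k hk
      obtain ⟨hk1, hk2⟩ := Finset.mem_Icc.1 hk
      have h1 : d - k < d := by omega
      have h2 : 1 ≤ d - k := by omega
      rw [mul_assoc, ih (d - k) h1 h2]
    rw [Finset.sum_congr rfl hterm] at hN
    -- convert the Icc sum to a range sum
    have hIcc : ∑ k ∈ Icc 1 (d-1), a k * L (d - k)
        = ∑ j ∈ range (d-1), (Nat.fib (j+2) : ℝ) * L ((d-1) - j) := by
      rw [← Finset.Ico_add_one_right_eq_Icc, show d - 1 + 1 = d from by omega,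
        Finset.sum_Ico_eq_sum_range]
      apply Finset.sum_congr rfl
      intro j hj
      have hj' : j < d - 1 := by simpa using hj
      have e1 : 1 + j + 1 = j + 2 := by omega
      have e2 : d - (1 + j) = (d - 1) - j := by omega
      rw [ha]
      simp only [e1, e2]
    rw [hIcc, lucas_conv L hL1 hL2 hLrec (d-1),
      show d - 1 + 1 = d from by omega, show d - 1 + 2 = d + 1 from by omega] at hN
    have hc : ((d - 1 : ℕ) : ℝ) + 1 = (d : ℝ) := by
      push_cast [Nat.cast_sub hd]
      ring
    rw [hc] at hN
    have hA : a d = (Nat.fib (d+1) : ℝ) := rfl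
    rw [hA] at hN
    linarith [hN]

theorem stmt13 (L : ℕ → ℝ) (hL1 : L 1 = 1) (hL2 : L 2 = 3)
    (hLrec : ∀ n : ℕ, 3 ≤ n → L n = L (n - 1) + L (n - 2))
    (d : ℕ) (hd : 1 ≤ d) :
    (d : ℝ) * ∑ p : Nat.Partition d,
        ((-1 : ℝ) ^ (p.parts.card - 1) * (Nat.factorial (p.parts.card - 1)) *
          ∏ i ∈ Finset.Icc 1 d, ((Nat.fib (i + 1) : ℝ)) ^ (p.parts.count i)) /
        ∏ i ∈ Finset.Icc 1 d, (Nat.factorial (p.parts.count i) : ℝ)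
    = L d := by
  have hmain := mainS L hL1 hL2 hLrec d hd
  rw [← hmain]
  congr 1
  apply Finset.sum_congr rfl
  intro p _
  have hsub : p.parts.toFinset ⊆ Finset.Icc 1 d := by
    intro i hi
    have hi' : i ∈ p.parts := Multiset.mem_toFinset.1 hi
    rw [Finset.mem_Icc]
    refine ⟨p.parts_pos hi', ?_⟩
    obtain ⟨t, ht⟩ := Multiset.exists_cons_of_mem hi'
    have := p.parts_sum
    rw [ht, Multiset.sum_cons] at this
    omega
  unfold Wgt
  congr 1
  · congr 1
    rw [Finset.prod_multiset_map_count]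
    exact (Finset.prod_subset hsub (fun x _ hx => by
      rw [Multiset.count_eq_zero_of_notMem (fun h => hx (Multiset.mem_toFinset.2 h)),
        pow_zero])).symm
  · exact (Finset.prod_subset hsub (fun x _ hx => by
      rw [Multiset.count_eq_zero_of_notMem (fun h => hx (Multiset.mem_toFinset.2 h))]
      simp)).symm
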